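/- arXiv:1112.5480 — 5 statements merged into one kernel-verified Lean document; each statement's English description precedes it below -/
import Mathlib

section
/- Let g ∈ ℝ^L, ε⁰, ε¹ ∈ ℝ^L with ε⁰ᵢ, ε¹ᵢ > 0 for all i, and define g'ᵢ = (gᵢ - g_{i-1})/ε¹ᵢ for i = 2,…,L. If ∑_{i=1}^L ε⁰ᵢ gᵢ = 0, then for every index i, |gᵢ| ≤ (1/h) ∑_{k=2}^L ε¹ₖ |g'ₖ| φ_{i,k}, where h = ∑_{i=1}^L ε⁰ᵢ, φ_{i,k} = ∑_{ℓ=1}^{k-1} ε⁰ℓ for k = 2,…,i and φ_{i,k} = ∑_{ℓ=k}^{L} ε⁰ℓ for k = i+1,…,L. -/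
private lemma tele_aux (g : ℕ → ℝ) (a b : ℕ) (hab : a ≤ b) :
    g b - g a = ∑ k ∈ Finset.Icc (a+1) b, (g k - g (k-1)) := by
  induction b with
  | zero =>
    have : a = 0 := Nat.le_zero.mp hab
    subst this; simp
  | succ n ih =>
    rcases Nat.lt_or_ge n a with h | h
    · have : a = n + 1 := by omega
      subst this; simp
    · rw [Finset.sum_Icc_succ_top (by omega : a + 1 ≤ n + 1), ← ih h]
      simp only [Nat.add_sub_cancel]
      ring

/-- Lemma B.1 (pre-Poincaré pointwise bound). -/
theorem pre_poincare_pointwise (L : ℕ) (hL : 1 ≤ L) (g ε0 ε1 : ℕ → ℝ)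
    (hε0 : ∀ i ∈ Finset.Icc 1 L, 0 < ε0 i)
    (hε1 : ∀ i ∈ Finset.Icc 1 L, 0 < ε1 i)
    (hmean : ∑ i ∈ Finset.Icc 1 L, ε0 i * g i = 0) :
    ∀ i ∈ Finset.Icc 1 L,
      |g i| ≤ (1 / ∑ j ∈ Finset.Icc 1 L, ε0 j) *
        ∑ k ∈ Finset.Icc 2 L, ε1 k * |(g k - g (k - 1)) / ε1 k| *
          (if k ≤ i then ∑ l ∈ Finset.Icc 1 (k - 1), ε0 l
           else ∑ l ∈ Finset.Icc k L, ε0 l) := by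
  intro i hi
  rw [Finset.mem_Icc] at hi
  have hh : 0 < ∑ j ∈ Finset.Icc 1 L, ε0 j :=
    Finset.sum_pos hε0 ⟨1, Finset.mem_Icc.mpr ⟨le_refl 1, hL⟩⟩
  have habs : ∀ k ∈ Finset.Icc 2 L,
      ε1 k * |(g k - g (k-1)) / ε1 k| *
        (if k ≤ i then ∑ l ∈ Finset.Icc 1 (k-1), ε0 l else ∑ l ∈ Finset.Icc k L, ε0 l)
      = |g k - g (k-1)| *
        (if k ≤ i then ∑ l ∈ Finset.Icc 1 (k-1), ε0 l else ∑ l ∈ Finset.Icc k L, ε0 l) := by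
    intro k hk
    rw [Finset.mem_Icc] at hk
    have h1 : 0 < ε1 k := hε1 k (Finset.mem_Icc.mpr ⟨by omega, hk.2⟩)
    rw [abs_div, abs_of_pos h1, mul_comm (ε1 k), div_mul_cancel₀ _ h1.ne']
  rw [Finset.sum_congr rfl habs, one_div_mul_eq_div, le_div_iff₀ hh]
  have key : |g i| * (∑ j ∈ Finset.Icc 1 L, ε0 j)
      ≤ ∑ j ∈ Finset.Icc 1 L, ε0 j * |g i - g j| := by
    have e1 : g i * (∑ j ∈ Finset.Icc 1 L, ε0 j)
        = ∑ j ∈ Finset.Icc 1 L, ε0 j * (g i - g j) := by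
      simp only [mul_sub, Finset.sum_sub_distrib, hmean, sub_zero, ← Finset.sum_mul]
      ring
    calc |g i| * (∑ j ∈ Finset.Icc 1 L, ε0 j)
        = |g i * (∑ j ∈ Finset.Icc 1 L, ε0 j)| := by
          rw [abs_mul, abs_of_pos hh]
      _ = |∑ j ∈ Finset.Icc 1 L, ε0 j * (g i - g j)| := by rw [e1]
      _ ≤ ∑ j ∈ Finset.Icc 1 L, |ε0 j * (g i - g j)| := Finset.abs_sum_le_sum_abs _ _
      _ = ∑ j ∈ Finset.Icc 1 L, ε0 j * |g i - g j| := by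
          refine Finset.sum_congr rfl fun j hj => ?_
          rw [abs_mul, abs_of_pos (hε0 j hj)]
  have step2 : ∀ j ∈ Finset.Icc 1 L, ε0 j * |g i - g j|
      ≤ ε0 j * ∑ k ∈ Finset.Icc 2 L,
          (if min i j < k ∧ k ≤ max i j then |g k - g (k-1)| else 0) := by
    intro j hj
    rw [Finset.mem_Icc] at hj
    refine mul_le_mul_of_nonneg_left ?_ (hε0 j (Finset.mem_Icc.mpr hj)).le
    have hT : Finset.Icc (min i j + 1) (max i j)
        = Finset.filter (fun k => min i j < k ∧ k ≤ max i j) (Finset.Icc 2 L) := by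
      ext k
      simp only [Finset.mem_Icc, Finset.mem_filter]
      omega
    have habs2 : |g i - g j| = |g (max i j) - g (min i j)| := by
      rcases le_total i j with h | h
      · rw [min_eq_left h, max_eq_right h, abs_sub_comm]
      · rw [min_eq_right h, max_eq_left h]
    calc |g i - g j|
        = |∑ k ∈ Finset.Icc (min i j + 1) (max i j), (g k - g (k-1))| := by
          rw [habs2, tele_aux g _ _ (min_le_max)]
      _ ≤ ∑ k ∈ Finset.Icc (min i j + 1) (max i j), |g k - g (k-1)| :=
          Finset.abs_sum_le_sum_abs _ _
      _ = ∑ k ∈ Finset.Icc 2 L,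
            (if min i j < k ∧ k ≤ max i j then |g k - g (k-1)| else 0) := by
          rw [hT, Finset.sum_filter]
  have swap : ∑ j ∈ Finset.Icc 1 L, (ε0 j * ∑ k ∈ Finset.Icc 2 L,
        (if min i j < k ∧ k ≤ max i j then |g k - g (k-1)| else 0))
      = ∑ k ∈ Finset.Icc 2 L, |g k - g (k-1)| *
          (if k ≤ i then ∑ l ∈ Finset.Icc 1 (k-1), ε0 l
           else ∑ l ∈ Finset.Icc k L, ε0 l) := by
    simp only [Finset.mul_sum, mul_ite, mul_zero]
    rw [Finset.sum_comm]
    refine Finset.sum_congr rfl fun k hk => ?_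
    rw [Finset.mem_Icc] at hk
    
    rcases le_or_gt k i with h | h
    · rw [if_pos h]
      have : Finset.filter (fun j => min i j < k ∧ k ≤ max i j) (Finset.Icc 1 L)
          = Finset.Icc 1 (k-1) := by
        ext j
        simp only [Finset.mem_Icc, Finset.mem_filter]
        omega
      rw [← Finset.sum_filter, this]
      exact Finset.sum_congr rfl fun j _ => mul_comm _ _
    · rw [if_neg (by omega)]
      have : Finset.filter (fun j => min i j < k ∧ k ≤ max i j) (Finset.Icc 1 L)
          = Finset.Icc k L := by
        ext j
        simp only [Finset.mem_Icc, Finset.mem_filter]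
        omega
      rw [← Finset.sum_filter, this]
      exact Finset.sum_congr rfl fun j _ => mul_comm _ _
  calc |g i| * (∑ j ∈ Finset.Icc 1 L, ε0 j)
      ≤ ∑ j ∈ Finset.Icc 1 L, ε0 j * |g i - g j| := key
    _ ≤ ∑ j ∈ Finset.Icc 1 L, (ε0 j * ∑ k ∈ Finset.Icc 2 L,
          (if min i j < k ∧ k ≤ max i j then |g k - g (k-1)| else 0)) :=
        Finset.sum_le_sum step2
    _ = _ := swap
end

section
/- Discrete Poincaré inequality on a non-uniform mesh: Let L ≥ 1, ε⁰, ε¹ ∈ ℝ^L with all entries positive, g ∈ ℝ^L with ∑_{i=1}^L ε⁰ᵢ gᵢ = 0, and g'ᵢ = (gᵢ - g_{i-1})/ε¹ᵢ for i = 2,…,L. Then ∑_{i=1}^L ε⁰ᵢ |gᵢ| ≤ (1/2) · (L² · max{max_i ε⁰ᵢ, max_k ε¹ₖ}² / h) · ∑_{k=2}^L ε¹ₖ |g'ₖ|, where h = ∑_{i=1}^L ε⁰ᵢ. -/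
open Finset

private lemma ite_one_nonneg (P : Prop) [Decidable P] : (0:ℝ) ≤ if P then (1:ℝ) else 0 := by
  split_ifs <;> norm_num

private lemma le_biSup_fin (f : ℕ → ℝ) (s : Finset ℕ) (h0 : ∃ x ∈ s, 0 ≤ f x)
    {i : ℕ} (hi : i ∈ s) : f i ≤ ⨆ j ∈ s, f j := by
  classical
  have hne : (s.image f).Nonempty := by
    obtain ⟨x, hx, _⟩ := h0
    exact ⟨f x, Finset.mem_image_of_mem f hx⟩
  rw [Finset.ciSup_eq_max'_image f (by simpa [Real.sSup_empty] using h0) hne]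
  exact Finset.le_max' _ _ (Finset.mem_image_of_mem f hi)

private lemma tele_abs (g : ℕ → ℝ) (a : ℕ) :
    ∀ b, a ≤ b → |g b - g a| ≤ ∑ k ∈ Finset.Icc (a + 1) b, |g k - g (k - 1)| := by
  intro b hb
  induction b, hb using Nat.le_induction with
  | base => simp
  | succ b hb ih =>
    rw [Finset.sum_Icc_succ_top (by omega)]
    have h1 := abs_sub_le (g (b + 1)) (g b) (g a)
    have h2 : (b + 1) - 1 = b := by omega
    rw [h2]
    linarith

/-- Discrete Poincaré inequality (ℓ¹ version) on a non-uniform mesh. -/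
theorem discrete_poincare_l1 (L : ℕ) (hL : 1 ≤ L) (g ε0 ε1 : ℕ → ℝ)
    (hε0 : ∀ i ∈ Finset.Icc 1 L, 0 < ε0 i)
    (hε1 : ∀ i ∈ Finset.Icc 1 L, 0 < ε1 i)
    (hmean : ∑ i ∈ Finset.Icc 1 L, ε0 i * g i = 0) :
    ∑ i ∈ Finset.Icc 1 L, ε0 i * |g i| ≤
      (1 / 2) * ((L : ℝ) ^ 2 *
          (max (⨆ i ∈ Finset.Icc 1 L, ε0 i) (⨆ k ∈ Finset.Icc 2 L, ε1 k)) ^ 2 /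
          ∑ i ∈ Finset.Icc 1 L, ε0 i) *
        ∑ k ∈ Finset.Icc 2 L, ε1 k * |(g k - g (k - 1)) / ε1 k| := by
  classical
  set S : Finset ℕ := Finset.Icc 1 L with hS
  set M : ℝ := max (⨆ i ∈ Finset.Icc 1 L, ε0 i) (⨆ k ∈ Finset.Icc 2 L, ε1 k) with hM
  set h : ℝ := ∑ i ∈ S, ε0 i with hh
  have h1S : (1 : ℕ) ∈ S := by simp [hS]; omega
  have hε0le : ∀ i ∈ S, ε0 i ≤ M := by
    intro i hi
    exact le_trans (le_biSup_fin ε0 S ⟨1, h1S, (hε0 1 h1S).le⟩ hi) (le_max_left _ _)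
  have hMpos : 0 < M := lt_of_lt_of_le (hε0 1 h1S) (hε0le 1 h1S)
  have hhpos : 0 < h := Finset.sum_pos hε0 ⟨1, h1S⟩
  have hhLM : h ≤ (L : ℝ) * M := by
    calc h ≤ ∑ _i ∈ S, M := Finset.sum_le_sum hε0le
    _ = (L : ℝ) * M := by
        rw [Finset.sum_const, hS, Nat.card_Icc]
        simp [nsmul_eq_mul]
  -- RHS sum equals V
  have hV : ∑ k ∈ Finset.Icc 2 L, ε1 k * |(g k - g (k - 1)) / ε1 k|
      = ∑ k ∈ Finset.Icc 2 L, |g k - g (k - 1)| := by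
    refine Finset.sum_congr rfl fun k hk => ?_
    have hk' : k ∈ Finset.Icc 1 L := by simp at hk ⊢; omega
    have hp := hε1 k hk'
    rw [abs_div, abs_of_pos hp, mul_comm, div_mul_cancel₀ _ hp.ne']
  set V : ℝ := ∑ k ∈ Finset.Icc 2 L, |g k - g (k - 1)| with hVdef
  have hVnn : 0 ≤ V := Finset.sum_nonneg fun k _ => abs_nonneg _
  -- mean zero bound
  have key : ∀ i ∈ S, h * |g i| ≤ ∑ j ∈ S, ε0 j * |g i - g j| := by
    intro i hi
    have heq : h * g i = ∑ j ∈ S, ε0 j * (g i - g j) := by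
      simp only [mul_sub, Finset.sum_sub_distrib, hmean, sub_zero, ← Finset.sum_mul]
      rfl
    calc h * |g i| = |h * g i| := by rw [abs_mul, abs_of_pos hhpos]
      _ = |∑ j ∈ S, ε0 j * (g i - g j)| := by rw [heq]
      _ ≤ ∑ j ∈ S, |ε0 j * (g i - g j)| := Finset.abs_sum_le_sum_abs _ _
      _ = ∑ j ∈ S, ε0 j * |g i - g j| := by
          refine Finset.sum_congr rfl fun j hj => ?_
          rw [abs_mul, abs_of_pos (hε0 j hj)]
  -- pointwise telescoping with indicator
  have tele2 : ∀ i ∈ S, ∀ j ∈ S, |g i - g j| ≤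
      ∑ k ∈ Finset.Icc 2 L,
        (if min i j < k ∧ k ≤ max i j then (1 : ℝ) else 0) * |g k - g (k - 1)| := by
    intro i hi j hj
    simp only [hS, Finset.mem_Icc] at hi hj
    have habs : |g i - g j| = |g (max i j) - g (min i j)| := by
      rcases le_total i j with hij | hij
      · rw [max_eq_right hij, min_eq_left hij, abs_sub_comm]
      · rw [max_eq_left hij, min_eq_right hij]
    rw [habs]
    refine le_trans (tele_abs g (min i j) (max i j) (by omega)) (le_of_eq ?_)
    have hset : Finset.Icc (min i j + 1) (max i j)
        = (Finset.Icc 2 L).filter (fun k => min i j < k ∧ k ≤ max i j) := by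
      ext k
      simp only [Finset.mem_Icc, Finset.mem_filter]
      omega
    rw [hset, Finset.sum_filter]
    refine Finset.sum_congr rfl fun k _ => ?_
    split_ifs <;> simp
  -- the coefficient bound for each k
  have coeff : ∀ k ∈ Finset.Icc 2 L,
      ∑ i ∈ S, ∑ j ∈ S, ε0 i * ε0 j *
        (if min i j < k ∧ k ≤ max i j then (1 : ℝ) else 0) ≤ h ^ 2 / 2 := by
    intro k _
    set A : ℝ := ∑ i ∈ S, ε0 i * (if i < k then (1 : ℝ) else 0) with hA
    set B : ℝ := ∑ i ∈ S, ε0 i * (if k ≤ i then (1 : ℝ) else 0) with hB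
    have hAB : A + B = h := by
      rw [hA, hB, ← Finset.sum_add_distrib]
      refine Finset.sum_congr rfl fun i _ => ?_
      rcases lt_or_ge i k with hik | hik
      · rw [if_pos hik, if_neg (by omega)]; ring
      · rw [if_neg (by omega), if_pos hik]; ring
    have hAnn : 0 ≤ A := Finset.sum_nonneg fun i hi =>
      mul_nonneg (hε0 i hi).le (ite_one_nonneg _)
    have hBnn : 0 ≤ B := Finset.sum_nonneg fun i hi =>
      mul_nonneg (hε0 i hi).le (ite_one_nonneg _)
    have hsplit : ∑ i ∈ S, ∑ j ∈ S, ε0 i * ε0 j *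
        (if min i j < k ∧ k ≤ max i j then (1 : ℝ) else 0) ≤ 2 * (A * B) := by
      have hpt : ∀ i ∈ S, ∀ j ∈ S, ε0 i * ε0 j *
          (if min i j < k ∧ k ≤ max i j then (1 : ℝ) else 0) ≤
          ε0 i * (if i < k then (1:ℝ) else 0) * (ε0 j * (if k ≤ j then (1:ℝ) else 0))
          + ε0 i * (if k ≤ i then (1:ℝ) else 0) * (ε0 j * (if j < k then (1:ℝ) else 0)) := by
        intro i hi j hj
        have h0i := (hε0 i hi).le
        have h0j := (hε0 j hj).le
        by_cases hc : min i j < k ∧ k ≤ max i j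
        · rw [if_pos hc]
          have hcase : (i < k ∧ k ≤ j) ∨ (j < k ∧ k ≤ i) := by omega
          rcases hcase with ⟨h1, h2⟩ | ⟨h1, h2⟩
          · rw [if_pos h1, if_pos h2, if_neg (by omega), if_neg (by omega)]
            nlinarith
          · rw [if_neg (by omega), if_pos h1, if_pos h2]
            nlinarith
        · rw [if_neg hc]
          have t1 := mul_nonneg (mul_nonneg h0i (ite_one_nonneg (i < k)))
            (mul_nonneg h0j (ite_one_nonneg (k ≤ j)))
          have t2 := mul_nonneg (mul_nonneg h0i (ite_one_nonneg (k ≤ i)))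
            (mul_nonneg h0j (ite_one_nonneg (j < k)))
          nlinarith
      have hprod1 : ∑ i ∈ S, ∑ j ∈ S,
          ε0 i * (if i < k then (1:ℝ) else 0) * (ε0 j * (if k ≤ j then (1:ℝ) else 0))
          = A * B := by
        rw [hA, hB, Finset.sum_mul_sum]
      have hprod2 : ∑ i ∈ S, ∑ j ∈ S,
          ε0 i * (if k ≤ i then (1:ℝ) else 0) * (ε0 j * (if j < k then (1:ℝ) else 0))
          = B * A := by
        rw [hA, hB, Finset.sum_mul_sum]
      calc ∑ i ∈ S, ∑ j ∈ S, ε0 i * ε0 j *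
            (if min i j < k ∧ k ≤ max i j then (1 : ℝ) else 0)
          ≤ ∑ i ∈ S, ∑ j ∈ S,
            (ε0 i * (if i < k then (1:ℝ) else 0) * (ε0 j * (if k ≤ j then (1:ℝ) else 0))
            + ε0 i * (if k ≤ i then (1:ℝ) else 0) * (ε0 j * (if j < k then (1:ℝ) else 0))) :=
            Finset.sum_le_sum fun i hi => Finset.sum_le_sum fun j hj => hpt i hi j hj
        _ = A * B + B * A := by
            simp only [Finset.sum_add_distrib]
            rw [hprod1, hprod2]
        _ = 2 * (A * B) := by ring
    nlinarith [sq_nonneg (A - B)]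
  -- swapping sums
  have swap : ∀ (F : ℕ → ℕ → ℕ → ℝ),
      ∑ i ∈ S, ∑ j ∈ S, ∑ k ∈ Finset.Icc 2 L, F i j k
        = ∑ k ∈ Finset.Icc 2 L, ∑ i ∈ S, ∑ j ∈ S, F i j k := by
    intro F
    have hmid : ∀ i, ∑ j ∈ S, ∑ k ∈ Finset.Icc 2 L, F i j k
        = ∑ k ∈ Finset.Icc 2 L, ∑ j ∈ S, F i j k := fun i => Finset.sum_comm
    simp_rw [hmid]
    exact Finset.sum_comm
  -- main chain
  have main : h * (∑ i ∈ S, ε0 i * |g i|) ≤ h ^ 2 / 2 * V := by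
    calc h * (∑ i ∈ S, ε0 i * |g i|)
        = ∑ i ∈ S, ε0 i * (h * |g i|) := by
          rw [Finset.mul_sum]; exact Finset.sum_congr rfl fun i _ => by ring
      _ ≤ ∑ i ∈ S, ε0 i * ∑ j ∈ S, ε0 j * |g i - g j| :=
          Finset.sum_le_sum fun i hi =>
            mul_le_mul_of_nonneg_left (key i hi) (hε0 i hi).le
      _ = ∑ i ∈ S, ∑ j ∈ S, ε0 i * ε0 j * |g i - g j| := by
          refine Finset.sum_congr rfl fun i _ => ?_
          rw [Finset.mul_sum]
          exact Finset.sum_congr rfl fun j _ => by ring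
      _ ≤ ∑ i ∈ S, ∑ j ∈ S, ε0 i * ε0 j *
            ∑ k ∈ Finset.Icc 2 L,
              (if min i j < k ∧ k ≤ max i j then (1 : ℝ) else 0) * |g k - g (k - 1)| :=
          Finset.sum_le_sum fun i hi => Finset.sum_le_sum fun j hj =>
            mul_le_mul_of_nonneg_left (tele2 i hi j hj)
              (mul_nonneg (hε0 i hi).le (hε0 j hj).le)
      _ = ∑ k ∈ Finset.Icc 2 L,
            (∑ i ∈ S, ∑ j ∈ S, ε0 i * ε0 j *
              (if min i j < k ∧ k ≤ max i j then (1 : ℝ) else 0)) * |g k - g (k - 1)| := by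
          simp_rw [Finset.mul_sum]
          rw [swap]
          refine Finset.sum_congr rfl fun k _ => ?_
          rw [Finset.sum_mul]
          refine Finset.sum_congr rfl fun i _ => ?_
          rw [Finset.sum_mul]
          exact Finset.sum_congr rfl fun j _ => by ring
      _ ≤ ∑ k ∈ Finset.Icc 2 L, (h ^ 2 / 2) * |g k - g (k - 1)| :=
          Finset.sum_le_sum fun k hk =>
            mul_le_mul_of_nonneg_right (coeff k hk) (abs_nonneg _)
      _ = h ^ 2 / 2 * V := by rw [hVdef, Finset.mul_sum]
  have step1 : ∑ i ∈ S, ε0 i * |g i| ≤ h / 2 * V := by nlinarith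
  rw [hV]
  refine le_trans step1 ?_
  have hconst : h / 2 ≤ 1 / 2 * ((L : ℝ) ^ 2 * M ^ 2 / h) := by
    have hle : h ≤ (L : ℝ) ^ 2 * M ^ 2 / h := by
      rw [le_div_iff₀ hhpos]
      nlinarith
    linarith
  exact mul_le_mul_of_nonneg_right hconst hVnn
end

section
/- Discrete Poincaré inequality in the sup norm: Let L ≥ 1, ε⁰, ε¹ ∈ ℝ^L with all entries positive, g ∈ ℝ^L with ∑_{i=1}^L ε⁰ᵢ gᵢ = 0, and g'ᵢ = (gᵢ - g_{i-1})/ε¹ᵢ for i = 2,…,L. Then max_{1 ≤ i ≤ L} |gᵢ| ≤ (1/2) · (L² · max_{1≤i≤L} ε⁰ᵢ / h) · max_{2 ≤ k ≤ L} ε¹ₖ |g'ₖ|, where h = ∑_{i=1}^L ε⁰ᵢ. -/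
lemma le_biSup_finset {s : Finset ℕ} {f : ℕ → ℝ} {a : ℕ} (ha : a ∈ s) : f a ≤ ⨆ j ∈ s, f j := by
  have hbdd : BddAbove (Set.range fun j => ⨆ _ : j ∈ s, f j) := by
    apply Set.Finite.bddAbove
    apply Set.Finite.subset ((s.finite_toSet.image f).insert 0)
    rintro x ⟨j, rfl⟩
    simp only [Set.mem_insert_iff]
    by_cases hj : j ∈ s
    · right; exact ⟨j, hj, (ciSup_pos (f := fun _ => f j) hj).symm⟩
    · left; simp [hj]
  calc f a = ⨆ _ : a ∈ s, f a := (ciSup_pos (f := fun _ => f a) ha).symm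
    _ ≤ ⨆ j, ⨆ _ : j ∈ s, f j := le_ciSup hbdd a

lemma sum_abs_sub_le (L i : ℕ) (h1 : 1 ≤ i) (h2 : i ≤ L) :
    ∑ j ∈ Finset.Icc 1 L, |(i : ℝ) - j| ≤ (L : ℝ) ^ 2 / 2 := by
  have hrefl : ∑ j ∈ Finset.Icc 1 L, |(i : ℝ) - j|
      = ∑ j ∈ Finset.Icc 1 L, |(i : ℝ) - ((L : ℝ) + 1 - j)| := by
    apply Finset.sum_nbij' (i := fun j => L + 1 - j) (j := fun j => L + 1 - j)
    · intro a ha; simp at ha ⊢; omega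
    · intro a ha; simp at ha ⊢; omega
    · intro a ha; simp at ha ⊢; omega
    · intro a ha; simp at ha ⊢; omega
    · intro a ha
      simp only [Finset.mem_Icc] at ha
      have : ((L + 1 - a : ℕ) : ℝ) = (L : ℝ) + 1 - a := by
        push_cast [Nat.cast_sub (by omega : a ≤ L + 1)]; ring
      rw [this]; congr 1; ring
  have key : ∀ j ∈ Finset.Icc 1 L,
      |(i : ℝ) - j| + |(i : ℝ) - ((L : ℝ) + 1 - j)| ≤ (L : ℝ) - 1 := by
    intro j hj
    simp only [Finset.mem_Icc] at hj
    have hi1 : (1 : ℝ) ≤ i := by exact_mod_cast h1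
    have hi2 : (i : ℝ) ≤ L := by exact_mod_cast h2
    have hj1 : (1 : ℝ) ≤ j := by exact_mod_cast hj.1
    have hj2 : (j : ℝ) ≤ L := by exact_mod_cast hj.2
    rcases abs_cases ((i : ℝ) - j) with ⟨e1, _⟩ | ⟨e1, _⟩ <;>
      rcases abs_cases ((i : ℝ) - ((L : ℝ) + 1 - j)) with ⟨e2, _⟩ | ⟨e2, _⟩ <;>
      rw [e1, e2] <;> linarith
  have h2sum : 2 * ∑ j ∈ Finset.Icc 1 L, |(i : ℝ) - j| ≤ (L : ℝ) * ((L : ℝ) - 1) := by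
    have := Finset.sum_le_sum key
    rw [Finset.sum_add_distrib, ← hrefl] at this
    simp only [Finset.sum_const, Nat.card_Icc, nsmul_eq_mul] at this
    have hcard : ((L + 1 - 1 : ℕ) : ℝ) = (L : ℝ) := by push_cast; ring
    rw [hcard] at this
    linarith
  nlinarith [h2sum, (by exact_mod_cast h2.trans' h1 : (1:ℝ) ≤ L)]

/-- Discrete Poincaré inequality (sup-norm version) on a non-uniform mesh. -/
theorem discrete_poincare_sup (L : ℕ) (hL : 1 ≤ L) (g ε0 ε1 : ℕ → ℝ)
    (hε0 : ∀ i ∈ Finset.Icc 1 L, 0 < ε0 i)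
    (hε1 : ∀ i ∈ Finset.Icc 1 L, 0 < ε1 i)
    (hmean : ∑ i ∈ Finset.Icc 1 L, ε0 i * g i = 0) :
    ∀ i ∈ Finset.Icc 1 L,
      |g i| ≤ (1 / 2) * ((L : ℝ) ^ 2 * (⨆ j ∈ Finset.Icc 1 L, ε0 j) /
          ∑ j ∈ Finset.Icc 1 L, ε0 j) *
        (⨆ k ∈ Finset.Icc 2 L, ε1 k * |(g k - g (k - 1)) / ε1 k|) := by
  intro i hi
  set E : ℝ := ⨆ j ∈ Finset.Icc 1 L, ε0 j with hE
  set M : ℝ := ⨆ k ∈ Finset.Icc 2 L, ε1 k * |(g k - g (k - 1)) / ε1 k| with hM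
  set h : ℝ := ∑ j ∈ Finset.Icc 1 L, ε0 j with hh
  simp only [Finset.mem_Icc] at hi
  have hne : (Finset.Icc 1 L).Nonempty := Finset.nonempty_Icc.mpr hL
  have hpos : 0 < h := Finset.sum_pos hε0 hne
  -- each step is bounded by M
  have step : ∀ k ∈ Finset.Icc 2 L, |g k - g (k - 1)| ≤ M := by
    intro k hk
    have hk' : k ∈ Finset.Icc 1 L := by simp at hk ⊢; omega
    have hk1 : 0 < ε1 k := hε1 k hk'
    have heq : ε1 k * |(g k - g (k - 1)) / ε1 k| = |g k - g (k - 1)| := by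
      rw [abs_div, abs_of_pos hk1]
      field_simp
    rw [← heq]
    exact le_biSup_finset (f := fun k => ε1 k * |(g k - g (k - 1)) / ε1 k|) hk
  -- nonnegativity of M
  have hM0 : 0 ≤ M := by
    by_cases h2L : 2 ≤ L
    · have h2 : (2 : ℕ) ∈ Finset.Icc 2 L := by simp [h2L]
      have := step 2 h2
      have : (0 : ℝ) ≤ |g 2 - g (2 - 1)| := abs_nonneg _
      linarith [step 2 h2]
    · have : Finset.Icc 2 L = ∅ := by
        apply Finset.Icc_eq_empty; omega
      rw [hM, this]
      simp [Real.iSup_of_isEmpty]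
  -- telescoping bound
  have tele : ∀ a b : ℕ, 1 ≤ a → a ≤ b → b ≤ L → |g b - g a| ≤ ((b : ℝ) - a) * M := by
    intro a b ha hab hbL
    induction b, hab using Nat.le_induction with
    | base => simp
    | succ b hab ih =>
      have hbL' : b ≤ L := by omega
      have := ih hbL'
      have hs : |g (b + 1) - g b| ≤ M := by
        have hmem : b + 1 ∈ Finset.Icc 2 L := by simp; omega
        have := step (b + 1) hmem
        simpa using this
      calc |g (b + 1) - g a| ≤ |g (b + 1) - g b| + |g b - g a| := by
            have := abs_sub_le (g (b+1)) (g b) (g a); linarith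
        _ ≤ M + ((b : ℝ) - a) * M := by linarith
        _ = (((b : ℕ) + 1 : ℝ) - a) * M := by ring
        _ = (((b + 1 : ℕ) : ℝ) - a) * M := by push_cast; ring
  have pair : ∀ j ∈ Finset.Icc 1 L, |g i - g j| ≤ |(i : ℝ) - j| * M := by
    intro j hj
    simp only [Finset.mem_Icc] at hj
    rcases le_total i j with hij | hij
    · have := tele i j hi.1 hij hj.2
      rw [abs_sub_comm]
      have habs : |(i : ℝ) - j| = (j : ℝ) - i := by
        rw [abs_of_nonpos (by exact_mod_cast sub_nonpos.mpr (by exact_mod_cast hij : (i:ℝ) ≤ j))]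
        ring
      rw [habs]; exact this
    · have := tele j i hj.1 hij hi.2
      have habs : |(i : ℝ) - j| = (i : ℝ) - j := by
        rw [abs_of_nonneg (by exact_mod_cast sub_nonneg.mpr (by exact_mod_cast hij : (j:ℝ) ≤ i))]
      rw [habs]; exact this
  have hElb : ∀ j ∈ Finset.Icc 1 L, ε0 j ≤ E := fun j hj => le_biSup_finset hj
  have hE0 : 0 ≤ E := le_trans (hε0 1 (by simp [hL])).le (hElb 1 (by simp [hL]))
  -- main estimate
  have e1 : g i * h = ∑ j ∈ Finset.Icc 1 L, ε0 j * (g i - g j) := by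
    simp only [mul_sub, Finset.sum_sub_distrib, hmean, sub_zero]
    rw [hh, Finset.mul_sum]
    exact Finset.sum_congr rfl fun j _ => by ring
  have e2 : |g i| * h ≤ E * ((L : ℝ) ^ 2 / 2) * M := by
    have c1 : |g i| * h = |g i * h| := by
      rw [abs_mul, abs_of_pos hpos]
    rw [c1, e1]
    calc |∑ j ∈ Finset.Icc 1 L, ε0 j * (g i - g j)|
        ≤ ∑ j ∈ Finset.Icc 1 L, |ε0 j * (g i - g j)| := Finset.abs_sum_le_sum_abs _ _
      _ ≤ ∑ j ∈ Finset.Icc 1 L, E * (|(i : ℝ) - j| * M) := by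
          apply Finset.sum_le_sum
          intro j hj
          rw [abs_mul, abs_of_pos (hε0 j hj)]
          have h1 := pair j hj
          have h2 := hElb j hj
          have h3 : 0 ≤ |(i : ℝ) - j| * M := mul_nonneg (abs_nonneg _) hM0
          calc ε0 j * |g i - g j| ≤ ε0 j * (|(i : ℝ) - j| * M) :=
                mul_le_mul_of_nonneg_left h1 (hε0 j hj).le
            _ ≤ E * (|(i : ℝ) - j| * M) := mul_le_mul_of_nonneg_right h2 h3
      _ = E * M * ∑ j ∈ Finset.Icc 1 L, |(i : ℝ) - j| := by
          rw [Finset.mul_sum]; congr 1; ext j; ring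
      _ ≤ E * M * ((L : ℝ) ^ 2 / 2) := by
          apply mul_le_mul_of_nonneg_left (sum_abs_sub_le L i hi.1 hi.2)
          exact mul_nonneg hE0 hM0
      _ = E * ((L : ℝ) ^ 2 / 2) * M := by ring
  have final : |g i| ≤ E * ((L : ℝ) ^ 2 / 2) * M / h := (le_div_iff₀ hpos).mpr e2
  calc |g i| ≤ E * ((L : ℝ) ^ 2 / 2) * M / h := final
    _ = (1 / 2) * ((L : ℝ) ^ 2 * E / h) * M := by ring
end

section
/- Discrete Friedrichs inequality in ℓ¹ on a non-uniform mesh: Let L ≥ 1, ε⁰, ε¹ ∈ ℝ^L with positive entries, f ∈ ℝ^L with f₁ = f_L = 0, and f'ᵢ = (fᵢ - f_{i-1})/ε¹ᵢ for i = 2,…,L. Then ∑_{i=1}^L ε⁰ᵢ |fᵢ| ≤ (1/2)(L-1) · max_{2 ≤ i ≤ L-1} max{ε⁰ᵢ, ε¹ᵢ} · ∑_{j=2}^L ε¹ⱼ |f'ⱼ|. -/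
open Finset

lemma tele_sum (f : ℕ → ℝ) (a : ℕ) : ∀ b, a ≤ b →
    ∑ j ∈ Finset.Icc (a+1) b, (f j - f (j-1)) = f b - f a := by
  intro b
  induction b with
  | zero => intro h; interval_cases a; simp
  | succ n ih =>
    intro h
    rcases Nat.lt_or_ge a (n+1) with h' | h'
    · have ha : a ≤ n := Nat.lt_succ_iff.mp h'
      rw [Finset.sum_Icc_succ_top (by omega : a + 1 ≤ n + 1), ih ha]
      simp
    · have : a = n+1 := le_antisymm h h'
      subst this
      simp

/-- Discrete Friedrichs inequality (ℓ¹ version) on a non-uniform mesh. -/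
theorem discrete_friedrichs_l1 (L : ℕ) (hL : 1 ≤ L) (f ε0 ε1 : ℕ → ℝ)
    (hε0 : ∀ i ∈ Finset.Icc 1 L, 0 < ε0 i)
    (hε1 : ∀ i ∈ Finset.Icc 1 L, 0 < ε1 i)
    (hf1 : f 1 = 0) (hfL : f L = 0) :
    ∑ i ∈ Finset.Icc 1 L, ε0 i * |f i| ≤
      (1 / 2) * ((L : ℝ) - 1) *
        (⨆ i ∈ Finset.Icc 2 (L - 1), max (ε0 i) (ε1 i)) *
        ∑ j ∈ Finset.Icc 2 L, ε1 j * |(f j - f (j - 1)) / ε1 j| := by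
  set S : ℝ := ∑ j ∈ Finset.Icc 2 L, |f j - f (j-1)| with hS
  set s : Finset ℕ := Finset.Icc 2 (L-1) with hs
  set g : ℕ → ℝ := fun i => max (ε0 i) (ε1 i) with hg
  set F : ℕ → ℝ := fun i => ⨆ _ : i ∈ s, g i with hF
  set M : ℝ := ⨆ i ∈ s, g i with hM
  have hMF : M = ⨆ i, F i := rfl
  have hS0 : 0 ≤ S := Finset.sum_nonneg fun j hj => abs_nonneg _
  -- rewrite RHS sum as S
  have hrhs : ∑ j ∈ Finset.Icc 2 L, ε1 j * |(f j - f (j - 1)) / ε1 j| = S := by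
    apply Finset.sum_congr rfl
    intro j hj
    simp only [Finset.mem_Icc] at hj
    have hpos : 0 < ε1 j := hε1 j (by simp [Finset.mem_Icc]; omega)
    rw [abs_div, abs_of_pos hpos, mul_div_cancel₀ _ hpos.ne']
  -- F values are 0 outside s, g inside s
  have hFin : ∀ i ∈ s, F i = g i := fun i hi => by simp [hF, ciSup_pos hi]
  have hFout : ∀ i ∉ s, F i = 0 := fun i hi => by
    have : IsEmpty (i ∈ s) := ⟨hi⟩
    simp only [hF]
    rw [iSup_of_empty', Real.sSup_empty]
  -- boundedness
  have hgpos : ∀ i ∈ s, 0 < g i := by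
    intro i hi
    simp only [hs, Finset.mem_Icc] at hi
    exact lt_max_of_lt_left (hε0 i (by simp [Finset.mem_Icc]; omega))
  have hbdd : BddAbove (Set.range F) := by
    refine ⟨∑ i ∈ s, g i, ?_⟩
    rintro _ ⟨i, rfl⟩
    by_cases hi : i ∈ s
    · rw [hFin i hi]
      exact Finset.single_le_sum (fun j hj => (hgpos j hj).le) hi
    · rw [hFout i hi]
      exact Finset.sum_nonneg fun j hj => (hgpos j hj).le
  have hM0 : 0 ≤ M := by
    have h1 : F (L+1) = 0 := hFout _ (by simp [hs, Finset.mem_Icc])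
    calc (0:ℝ) = F (L+1) := h1.symm
    _ ≤ M := le_ciSup hbdd _
  have hMle : ∀ i ∈ s, ε0 i ≤ M := by
    intro i hi
    calc ε0 i ≤ g i := le_max_left _ _
    _ = F i := (hFin i hi).symm
    _ ≤ M := le_ciSup hbdd _
  -- key bound |f i| ≤ S / 2 for i ∈ Icc 1 L
  have hkey : ∀ i ∈ Finset.Icc 1 L, |f i| ≤ S / 2 := by
    intro i hi
    simp only [Finset.mem_Icc] at hi
    have h1 : f i = f 1 + ∑ j ∈ Finset.Icc 2 i, (f j - f (j-1)) := by
      rw [tele_sum f 1 i hi.1]; ring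
    have h2 : f i = f L - ∑ j ∈ Finset.Icc (i+1) L, (f j - f (j-1)) := by
      rw [tele_sum f i L hi.2]; ring
    have b1 : |f i| ≤ ∑ j ∈ Finset.Icc 2 i, |f j - f (j-1)| := by
      rw [h1, hf1, zero_add]
      exact Finset.abs_sum_le_sum_abs _ _
    have b2 : |f i| ≤ ∑ j ∈ Finset.Icc (i+1) L, |f j - f (j-1)| := by
      rw [h2, hfL, zero_sub, abs_neg]
      exact Finset.abs_sum_le_sum_abs _ _
    have hdisj : Disjoint (Finset.Icc 2 i) (Finset.Icc (i+1) L) := by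
      rw [Finset.disjoint_left]
      intro j hj1 hj2
      simp only [Finset.mem_Icc] at hj1 hj2
      omega
    have hsub : Finset.Icc 2 i ∪ Finset.Icc (i+1) L ⊆ Finset.Icc 2 L := by
      intro j hj
      simp only [Finset.mem_union, Finset.mem_Icc] at hj ⊢
      omega
    have : ∑ j ∈ Finset.Icc 2 i, |f j - f (j-1)| +
        ∑ j ∈ Finset.Icc (i+1) L, |f j - f (j-1)| ≤ S := by
      rw [← Finset.sum_union hdisj]
      exact Finset.sum_le_sum_of_subset_of_nonneg hsub fun j _ _ => abs_nonneg _
    linarith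
  -- reduce LHS to interior sum
  have hlhs : ∑ i ∈ Finset.Icc 1 L, ε0 i * |f i| = ∑ i ∈ s, ε0 i * |f i| := by
    symm
    apply Finset.sum_subset
    · intro i hi
      simp only [hs, Finset.mem_Icc] at hi ⊢
      omega
    · intro i hi his
      simp only [hs, Finset.mem_Icc] at hi his
      have : f i = 0 := by
        rcases (by omega : i = 1 ∨ i = L) with h | h <;> subst h <;> assumption
      simp [this]
  rw [hrhs, hlhs]
  calc ∑ i ∈ s, ε0 i * |f i| ≤ ∑ i ∈ s, M * (S/2) := by
        apply Finset.sum_le_sum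
        intro i hi
        have h1 : ε0 i ≤ M := hMle i hi
        have h2 : |f i| ≤ S/2 := by
          apply hkey
          simp only [hs, Finset.mem_Icc] at hi
          simp only [Finset.mem_Icc]; omega
        have h3 : 0 ≤ ε0 i := by
          simp only [hs, Finset.mem_Icc] at hi
          exact (hε0 i (by simp [Finset.mem_Icc]; omega)).le
        calc ε0 i * |f i| ≤ ε0 i * (S/2) := by
              exact mul_le_mul_of_nonneg_left h2 h3
        _ ≤ M * (S/2) := mul_le_mul_of_nonneg_right h1 (by linarith)
  _ = (s.card : ℝ) * (M * (S/2)) := by rw [Finset.sum_const, nsmul_eq_mul]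
  _ ≤ ((L:ℝ) - 1) * (M * (S/2)) := by
        apply mul_le_mul_of_nonneg_right _ (by positivity)
        have hcard : s.card = L - 2 := by simp [hs, Nat.card_Icc]; omega
        rw [hcard]
        have : ((L - 2 : ℕ) : ℝ) ≤ (L : ℝ) - 1 := by
          rcases Nat.lt_or_ge L 2 with h | h
          · interval_cases L <;> norm_num
          · rw [Nat.cast_sub h]; push_cast; linarith
        exact this
  _ = (1 / 2) * ((L : ℝ) - 1) * M * S := by ring
end

section
/- Bound on perturbed trapezoidal quadrature: with the setup of the previous statement, |⟨f,v⟩_r − ⟨f,v⟩_ε| ≤ (1/8) ε² · (∑_{k ∈ K_U} ε |f'_{ℓ_k+1}|²)^{1/2} · (∑_{ℓ} ε |v'_ℓ|²)^{1/2}, using θ(1−θ) ≤ 1/4 and Cauchy–Schwarz. -/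
private lemma ptb_reindexA (N : ℕ) (KU : Finset ℕ) (hKU : KU ⊆ Finset.range N)
    (F : ℕ → ℝ) :
    ∑ ℓ ∈ Finset.Icc 1 N, (if ℓ - 1 ∈ KU then F (ℓ - 1) else 0)
      = ∑ k ∈ KU, F k := by
  have hinj : ∀ x ∈ KU, ∀ y ∈ KU, x + 1 = y + 1 → x = y := by omega
  rw [show (∑ k ∈ KU, F k)
      = ∑ ℓ ∈ KU.image (· + 1), (if ℓ - 1 ∈ KU then F (ℓ - 1) else 0) by
    rw [Finset.sum_image hinj]
    exact Finset.sum_congr rfl fun k hk => by simp [hk]]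
  refine (Finset.sum_subset ?_ ?_).symm
  · intro ℓ hℓ
    simp only [Finset.mem_image] at hℓ
    obtain ⟨k, hk, rfl⟩ := hℓ
    have := Finset.mem_range.mp (hKU hk)
    simp only [Finset.mem_Icc]; omega
  · intro ℓ hℓ hℓ'
    rw [if_neg]
    intro h
    refine hℓ' (Finset.mem_image.mpr ⟨ℓ - 1, h, ?_⟩)
    have := Finset.mem_Icc.mp hℓ; omega

private lemma ptb_reindexB (N : ℕ) (KU : Finset ℕ) (hKU : KU ⊆ Finset.range N)
    (F : ℕ → ℕ → ℝ) (hF : F 0 0 = F 0 N) :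
    ∑ ℓ ∈ Finset.Icc 1 N, (if ℓ % N ∈ KU then F (ℓ % N) ℓ else 0)
      = ∑ k ∈ KU, F k k := by
  set m : ℕ → ℕ := fun k => if k = 0 then N else k with hm
  have hinj : ∀ x ∈ KU, ∀ y ∈ KU, m x = m y → x = y := by
    intro x hx y hy h
    have hx' := Finset.mem_range.mp (hKU hx)
    have hy' := Finset.mem_range.mp (hKU hy)
    simp only [hm] at h
    split_ifs at h <;> omega
  have hmod : ∀ k ∈ KU, m k % N = k := by
    intro k hk
    have := Finset.mem_range.mp (hKU hk)
    simp only [hm]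
    split_ifs with h
    · simp [h, Nat.mod_self]
    · exact Nat.mod_eq_of_lt this
  rw [show (∑ k ∈ KU, F k k)
      = ∑ ℓ ∈ KU.image m, (if ℓ % N ∈ KU then F (ℓ % N) ℓ else 0) by
    rw [Finset.sum_image hinj]
    refine Finset.sum_congr rfl fun k hk => ?_
    rw [hmod k hk, if_pos hk]
    by_cases h0 : k = 0
    · simp only [hm, h0, if_pos rfl]; exact hF
    · simp [hm, h0]]
  refine (Finset.sum_subset ?_ ?_).symm
  · intro ℓ hℓ
    simp only [Finset.mem_image] at hℓ
    obtain ⟨k, hk, rfl⟩ := hℓ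
    have := Finset.mem_range.mp (hKU hk)
    simp only [hm, Finset.mem_Icc]
    split_ifs <;> omega
  · intro ℓ hℓ hℓ'
    rw [if_neg]
    intro h
    have hℓ2 := Finset.mem_Icc.mp hℓ
    refine hℓ' (Finset.mem_image.mpr ⟨ℓ % N, h, ?_⟩)
    simp only [hm]
    rcases eq_or_lt_of_le hℓ2.2 with h1 | h1
    · simp [h1, Nat.mod_self]
    · rw [Nat.mod_eq_of_lt h1]; split_ifs <;> omega

/-- Bound on the perturbed trapezoidal quadrature error, obtained from the
quadrature identity via `θ(1−θ) ≤ 1/4` and the Cauchy–Schwarz inequality. -/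
theorem perturbed_trapezoidal_bound
    (N : ℕ) (hN : 0 < N) (f v : ℕ → ℝ)
    (hfper : ∀ ℓ, f (ℓ + N) = f ℓ) (hvper : ∀ ℓ, v (ℓ + N) = v ℓ)
    (KU : Finset ℕ) (hKU : KU ⊆ Finset.range N)
    (θ : ℕ → ℝ) (hθ : ∀ k ∈ KU, 0 < θ k ∧ θ k < 1) :
    |((∑ ℓ ∈ Finset.Icc 1 N,
          (1 / 2) * ((if ℓ - 1 ∈ KU then 1 - θ (ℓ - 1) else 1) * (N : ℝ)⁻¹ +
              (if ℓ % N ∈ KU then θ (ℓ % N) else 1) * (N : ℝ)⁻¹) * (f ℓ * v ℓ)) +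
        ∑ k ∈ KU, (1 / 2) * (N : ℝ)⁻¹ *
          (((1 - θ k) * f k + θ k * f (k + 1)) * ((1 - θ k) * v k + θ k * v (k + 1)))) -
      ∑ ℓ ∈ Finset.Icc 1 N, (N : ℝ)⁻¹ * (f ℓ * v ℓ)| ≤
    (1 / 8) * (N : ℝ)⁻¹ ^ 2 *
      Real.sqrt (∑ k ∈ KU, (N : ℝ)⁻¹ * ((f (k + 1) - f k) / (N : ℝ)⁻¹) ^ 2) *
      Real.sqrt (∑ ℓ ∈ Finset.Icc 1 N, (N : ℝ)⁻¹ * ((v ℓ - v (ℓ - 1)) / (N : ℝ)⁻¹) ^ 2) := by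
  have hNR : (0:ℝ) < (N:ℝ) := by exact_mod_cast hN
  have hNne : (N:ℝ) ≠ 0 := ne_of_gt hNR
  set ε : ℝ := (N:ℝ)⁻¹ with hε
  have hεpos : 0 < ε := inv_pos.mpr hNR
  set Sf : ℝ := ∑ k ∈ KU, (f (k+1) - f k)^2 with hSf
  set Sv : ℝ := ∑ ℓ ∈ Finset.Icc 1 N, (v ℓ - v (ℓ-1))^2 with hSv
  have hSf0 : 0 ≤ Sf := Finset.sum_nonneg fun _ _ => sq_nonneg _
  have hSv0 : 0 ≤ Sv := Finset.sum_nonneg fun _ _ => sq_nonneg _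
  -- Step 1: the quadrature-error identity
  have hid : ((∑ ℓ ∈ Finset.Icc 1 N,
          (1 / 2) * ((if ℓ - 1 ∈ KU then 1 - θ (ℓ - 1) else 1) * ε +
              (if ℓ % N ∈ KU then θ (ℓ % N) else 1) * ε) * (f ℓ * v ℓ)) +
        ∑ k ∈ KU, (1 / 2) * ε *
          (((1 - θ k) * f k + θ k * f (k + 1)) * ((1 - θ k) * v k + θ k * v (k + 1)))) -
      ∑ ℓ ∈ Finset.Icc 1 N, ε * (f ℓ * v ℓ)
      = ∑ k ∈ KU, -((1/2) * ε * (θ k * (1 - θ k)) *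
          ((f (k+1) - f k) * (v (k+1) - v k))) := by
    have hA := ptb_reindexA N KU hKU
      (fun k => -(1/2) * θ k * ε * (f (k+1) * v (k+1)))
    have hB := ptb_reindexB N KU hKU
      (fun k ℓ => -(1/2) * (1 - θ k) * ε * (f ℓ * v ℓ))
      (by rw [show f N = f 0 by simpa using hfper 0,
            show v N = v 0 by simpa using hvper 0])
    have hstep : (∑ ℓ ∈ Finset.Icc 1 N,
          (1 / 2) * ((if ℓ - 1 ∈ KU then 1 - θ (ℓ - 1) else 1) * ε +
              (if ℓ % N ∈ KU then θ (ℓ % N) else 1) * ε) * (f ℓ * v ℓ))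
        - ∑ ℓ ∈ Finset.Icc 1 N, ε * (f ℓ * v ℓ)
        = (∑ k ∈ KU, -(1/2) * θ k * ε * (f (k+1) * v (k+1)))
          + ∑ k ∈ KU, -(1/2) * (1 - θ k) * ε * (f k * v k) := by
      rw [← Finset.sum_sub_distrib, ← hA, ← hB, ← Finset.sum_add_distrib]
      refine Finset.sum_congr rfl fun ℓ hℓ => ?_
      have hℓ1 : ℓ - 1 + 1 = ℓ := by
        have := (Finset.mem_Icc.mp hℓ).1; omega
      rw [hℓ1]
      split_ifs <;> ring
    calc ((∑ ℓ ∈ Finset.Icc 1 N,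
          (1 / 2) * ((if ℓ - 1 ∈ KU then 1 - θ (ℓ - 1) else 1) * ε +
              (if ℓ % N ∈ KU then θ (ℓ % N) else 1) * ε) * (f ℓ * v ℓ)) +
        ∑ k ∈ KU, (1 / 2) * ε *
          (((1 - θ k) * f k + θ k * f (k + 1)) * ((1 - θ k) * v k + θ k * v (k + 1)))) -
      ∑ ℓ ∈ Finset.Icc 1 N, ε * (f ℓ * v ℓ)
        = ((∑ ℓ ∈ Finset.Icc 1 N,
            (1 / 2) * ((if ℓ - 1 ∈ KU then 1 - θ (ℓ - 1) else 1) * ε +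
                (if ℓ % N ∈ KU then θ (ℓ % N) else 1) * ε) * (f ℓ * v ℓ))
            - ∑ ℓ ∈ Finset.Icc 1 N, ε * (f ℓ * v ℓ))
          + ∑ k ∈ KU, (1 / 2) * ε *
            (((1 - θ k) * f k + θ k * f (k + 1)) * ((1 - θ k) * v k + θ k * v (k + 1))) := by
          ring
      _ = ((∑ k ∈ KU, -(1/2) * θ k * ε * (f (k+1) * v (k+1)))
            + ∑ k ∈ KU, -(1/2) * (1 - θ k) * ε * (f k * v k))
          + ∑ k ∈ KU, (1 / 2) * ε *
            (((1 - θ k) * f k + θ k * f (k + 1)) * ((1 - θ k) * v k + θ k * v (k + 1))) := by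
          rw [hstep]
      _ = ∑ k ∈ KU, (-(1/2) * θ k * ε * (f (k+1) * v (k+1))
            + -(1/2) * (1 - θ k) * ε * (f k * v k)
            + (1 / 2) * ε *
              (((1 - θ k) * f k + θ k * f (k + 1)) * ((1 - θ k) * v k + θ k * v (k + 1)))) := by
          rw [Finset.sum_add_distrib, Finset.sum_add_distrib]
      _ = ∑ k ∈ KU, -((1/2) * ε * (θ k * (1 - θ k)) *
            ((f (k+1) - f k) * (v (k+1) - v k))) :=
          Finset.sum_congr rfl fun k hk => by ring
  rw [hid]
  -- Step 2: rewrite the right-hand side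
  have hrw : ∀ (g : ℕ → ℝ) (s : Finset ℕ),
      ∑ i ∈ s, ε * (g i / ε)^2 = (N:ℝ) * ∑ i ∈ s, (g i)^2 := by
    intro g s
    rw [Finset.mul_sum]
    refine Finset.sum_congr rfl fun i _ => ?_
    rw [hε]
    field_simp
  have hRf : (∑ k ∈ KU, ε * ((f (k + 1) - f k) / ε) ^ 2) = (N:ℝ) * Sf :=
    hrw (fun k => f (k+1) - f k) KU
  have hRv : (∑ ℓ ∈ Finset.Icc 1 N, ε * ((v ℓ - v (ℓ - 1)) / ε) ^ 2) = (N:ℝ) * Sv :=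
    hrw (fun ℓ => v ℓ - v (ℓ-1)) (Finset.Icc 1 N)
  rw [hRf, hRv, Real.sqrt_mul hNR.le, Real.sqrt_mul hNR.le]
  have hrhs : (1 / 8) * ε ^ 2 * (Real.sqrt N * Real.sqrt Sf) *
      (Real.sqrt N * Real.sqrt Sv) = (1/8) * ε * (Real.sqrt Sf * Real.sqrt Sv) := by
    have h1 : Real.sqrt N * Real.sqrt N = (N:ℝ) := Real.mul_self_sqrt hNR.le
    have h2 : ε ^ 2 * ((N:ℝ)) = ε := by rw [hε]; field_simp
    calc (1 / 8) * ε ^ 2 * (Real.sqrt N * Real.sqrt Sf) * (Real.sqrt N * Real.sqrt Sv)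
        = (1/8) * (ε ^ 2 * (Real.sqrt N * Real.sqrt N)) * (Real.sqrt Sf * Real.sqrt Sv) := by
          ring
      _ = (1/8) * ε * (Real.sqrt Sf * Real.sqrt Sv) := by rw [h1, h2]
  rw [hrhs]
  -- Step 3: bound the sum
  calc |∑ k ∈ KU, -((1/2) * ε * (θ k * (1 - θ k)) *
          ((f (k+1) - f k) * (v (k+1) - v k)))|
      ≤ ∑ k ∈ KU, |(-((1/2) * ε * (θ k * (1 - θ k)) *
          ((f (k+1) - f k) * (v (k+1) - v k))))| := Finset.abs_sum_le_sum_abs _ _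
    _ ≤ ∑ k ∈ KU, (1/8) * ε * (|f (k+1) - f k| * |v (k+1) - v k|) := by
        refine Finset.sum_le_sum fun k hk => ?_
        obtain ⟨h0, h1⟩ := hθ k hk
        have hpos : 0 < (1/2) * ε * (θ k * (1 - θ k)) :=
          mul_pos (mul_pos (by norm_num) hεpos) (mul_pos h0 (by linarith))
        rw [abs_neg, abs_mul, abs_of_pos hpos, abs_mul]
        have ht : θ k * (1 - θ k) ≤ 1/4 := by nlinarith [sq_nonneg (θ k - 1/2)]
        have ha : (1/2) * ε * (θ k * (1 - θ k)) ≤ (1/8) * ε := by nlinarith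
        exact mul_le_mul_of_nonneg_right ha (by positivity)
    _ = (1/8) * ε * ∑ k ∈ KU, |f (k+1) - f k| * |v (k+1) - v k| := by
        rw [Finset.mul_sum]
    _ ≤ (1/8) * ε * (Real.sqrt Sf * Real.sqrt Sv) := by
        refine mul_le_mul_of_nonneg_left ?_ (by positivity)
        have hCS := Real.sum_mul_le_sqrt_mul_sqrt KU
          (fun k => |f (k+1) - f k|) (fun k => |v (k+1) - v k|)
        simp only [sq_abs] at hCS
        refine hCS.trans ?_
        refine mul_le_mul_of_nonneg_left ?_ (Real.sqrt_nonneg _)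
        refine Real.sqrt_le_sqrt ?_
        have hrei := ptb_reindexA N KU hKU (fun k => (v (k+1) - v k)^2)
        rw [hSv, ← hrei]
        refine Finset.sum_le_sum fun ℓ hℓ => ?_
        have hℓ1 : ℓ - 1 + 1 = ℓ := by
          have := (Finset.mem_Icc.mp hℓ).1; omega
        split_ifs
        · rw [hℓ1]
        · positivity
end
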